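/- Let R → S be a homomorphism of commutative rings and I ⊆ S an ideal. Then the natural map of inverse limits lim_m (Ω_{S/R}/I^m•Ω_{S/R}) → lim_m Ω_{(S/I^m)/R} is an isomorphism of S-modules, where each inverse limit is realized as the submodule of the product over m ∈ ℕ consisting of sequences compatible with the transition maps, the transition maps on the left are the natural surjections Ω_{S/R}/I^{m+1}Ω → Ω_{S/R}/I^mΩ, the transition maps on the right are induced by the surjections S/I^{m+1} → S/I^m, and the map between the limits is induced levelwise by the natural maps Ω_{S/R}/I^m•Ω_{S/R} → Ω_{(S/I^m)/R}. -/

import Mathlib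

variable {R S : Type*} [CommRing R] [CommRing S] [Algebra R S] (I : Ideal S)

/-- `I^m • Ω[S⁄R]` is killed by the natural map to `Ω[(S/I^m)⁄R]`. -/
theorem pow_smul_le_ker_kaehlerMap (m : ℕ) :
    (I ^ m • ⊤ : Submodule S (Ω[S⁄R])) ≤
      LinearMap.ker (KaehlerDifferential.map R R S (S ⧸ I ^ m)) := by
  refine Submodule.smul_le.2 fun r hr x _ => ?_
  have h0 : algebraMap S (S ⧸ I ^ m) r = 0 := by
    rw [Ideal.Quotient.algebraMap_eq]
    exact Ideal.Quotient.eq_zero_iff_mem.2 hr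
  rw [LinearMap.mem_ker, map_smul,
    ← algebraMap_smul (S ⧸ I ^ m) r (KaehlerDifferential.map R R S (S ⧸ I ^ m) x), h0,
    zero_smul]

/-- The `S`-linear transition map `Ω[(S/I^{m+1})⁄R] → Ω[(S/I^m)⁄R]` induced by the
surjection `S/I^{m+1} → S/I^m`. -/
noncomputable def kaehlerQuotTrans (m : ℕ) :
    Ω[(S ⧸ I ^ (m + 1))⁄R] →ₗ[S] Ω[(S ⧸ I ^ m)⁄R] :=
  letI : Algebra (S ⧸ I ^ (m + 1)) (S ⧸ I ^ m) :=
    (Ideal.Quotient.factor (Ideal.pow_le_pow_right (Nat.le_succ m))).toAlgebra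
  haveI hST : IsScalarTower S (S ⧸ I ^ (m + 1)) (S ⧸ I ^ m) :=
    IsScalarTower.of_algebraMap_eq fun s => by
      simp [RingHom.algebraMap_toAlgebra, Ideal.Quotient.algebraMap_eq]
  haveI hRT : IsScalarTower R (S ⧸ I ^ (m + 1)) (S ⧸ I ^ m) :=
    IsScalarTower.of_algebraMap_eq fun r => by
      rw [IsScalarTower.algebraMap_apply R S (S ⧸ I ^ m),
        IsScalarTower.algebraMap_apply S (S ⧸ I ^ (m + 1)) (S ⧸ I ^ m),
        ← IsScalarTower.algebraMap_apply R S (S ⧸ I ^ (m + 1))]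
  haveI hcomm : SMulCommClass R (S ⧸ I ^ (m + 1)) (S ⧸ I ^ m) :=
    ⟨fun r a b => by
      rw [Algebra.smul_def, Algebra.smul_def, Algebra.smul_def, Algebra.smul_def]
      ring⟩
  (KaehlerDifferential.map R R (S ⧸ I ^ (m + 1)) (S ⧸ I ^ m)).restrictScalars S

/-- The natural map `Ω[S⁄R]/I^m•Ω[S⁄R] → Ω[(S/I^m)⁄R]`. -/
noncomputable def kaehlerToQuot (m : ℕ) :
    (Ω[S⁄R] ⧸ (I ^ m • ⊤ : Submodule S (Ω[S⁄R]))) →ₗ[S] Ω[(S ⧸ I ^ m)⁄R] :=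
  Submodule.liftQ _ (KaehlerDifferential.map R R S (S ⧸ I ^ m))
    (pow_smul_le_ker_kaehlerMap I m)

theorem kaehlerQuotTrans_comp_map (m : ℕ) :
    (kaehlerQuotTrans (R := R) I m).comp (KaehlerDifferential.map R R S (S ⧸ I ^ (m + 1)))
      = KaehlerDifferential.map R R S (S ⧸ I ^ m) := by
  letI : Algebra (S ⧸ I ^ (m + 1)) (S ⧸ I ^ m) :=
    (Ideal.Quotient.factor (Ideal.pow_le_pow_right (Nat.le_succ m))).toAlgebra
  haveI hST : IsScalarTower S (S ⧸ I ^ (m + 1)) (S ⧸ I ^ m) :=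
    IsScalarTower.of_algebraMap_eq fun s => by
      simp [RingHom.algebraMap_toAlgebra, Ideal.Quotient.algebraMap_eq]
  haveI hRT : IsScalarTower R (S ⧸ I ^ (m + 1)) (S ⧸ I ^ m) :=
    IsScalarTower.of_algebraMap_eq fun r => by
      rw [IsScalarTower.algebraMap_apply R S (S ⧸ I ^ m),
        IsScalarTower.algebraMap_apply S (S ⧸ I ^ (m + 1)) (S ⧸ I ^ m),
        ← IsScalarTower.algebraMap_apply R S (S ⧸ I ^ (m + 1))]
  haveI hcomm : SMulCommClass R (S ⧸ I ^ (m + 1)) (S ⧸ I ^ m) :=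
    ⟨fun r a b => by
      rw [Algebra.smul_def, Algebra.smul_def, Algebra.smul_def, Algebra.smul_def]
      ring⟩
  apply Derivation.liftKaehlerDifferential_unique
  ext x
  simp only [Derivation.coe_comp, LinearMap.coe_comp, LinearMap.coe_restrictScalars,
    Function.comp_apply, Derivation.coeFn_coe, KaehlerDifferential.map_D]
  show (KaehlerDifferential.map R R (S ⧸ I ^ (m + 1)) (S ⧸ I ^ m))
      (KaehlerDifferential.D R (S ⧸ I ^ (m + 1)) ((algebraMap S (S ⧸ I ^ (m + 1))) x))
    = KaehlerDifferential.D R (S ⧸ I ^ m) ((algebraMap S (S ⧸ I ^ m)) x)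
  rw [KaehlerDifferential.map_D, ← IsScalarTower.algebraMap_apply]

/-- The natural surjection `Ω/I^{m+1}Ω → Ω/I^m Ω`. -/
noncomputable def kaehlerTransQ (m : ℕ) :
    (Ω[S⁄R] ⧸ (I ^ (m + 1) • ⊤ : Submodule S (Ω[S⁄R]))) →ₗ[S]
      (Ω[S⁄R] ⧸ (I ^ m • ⊤ : Submodule S (Ω[S⁄R]))) :=
  Submodule.mapQ _ _ LinearMap.id
    (by rw [Submodule.comap_id]
        exact Submodule.smul_mono_left (Ideal.pow_le_pow_right (Nat.le_succ m)))

theorem kaehlerToQuot_compat (m : ℕ) :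
    (kaehlerQuotTrans (R := R) I m).comp (kaehlerToQuot (R := R) I (m + 1))
      = (kaehlerToQuot (R := R) I m).comp (kaehlerTransQ (R := R) I m) := by
  refine Submodule.linearMap_qext _ (LinearMap.ext fun ω => ?_)
  have h := LinearMap.congr_fun (kaehlerQuotTrans_comp_map I m) ω
  simp only [LinearMap.coe_comp, Function.comp_apply] at h
  simp only [LinearMap.coe_comp, Function.comp_apply, Submodule.mkQ_apply,
    kaehlerToQuot, kaehlerTransQ, Submodule.liftQ_apply, Submodule.mapQ_apply,
    LinearMap.id_coe, id_eq]
  exact h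

/-- The inverse limit of a tower of `S`-modules, realized as the submodule of the
product consisting of the sequences compatible with the transition maps. -/
def towerLimit {S : Type*} [CommRing S] (A : ℕ → Type*) [∀ m, AddCommGroup (A m)]
    [∀ m, Module S (A m)] (a : ∀ m, A (m + 1) →ₗ[S] A m) : Submodule S (∀ m, A m) where
  carrier := {x | ∀ m, a m (x (m + 1)) = x m}
  add_mem' := fun {x y} hx hy m => by simp [hx m, hy m]
  zero_mem' := fun m => by simp
  smul_mem' := fun c {x} hx m => by simp [hx m]

/-- The map between inverse limits induced levelwise by maps commuting with the
transition maps. -/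
noncomputable def towerLimitMap {S : Type*} [CommRing S] {A B : ℕ → Type*}
    [∀ m, AddCommGroup (A m)] [∀ m, Module S (A m)]
    [∀ m, AddCommGroup (B m)] [∀ m, Module S (B m)]
    (a : ∀ m, A (m + 1) →ₗ[S] A m) (b : ∀ m, B (m + 1) →ₗ[S] B m)
    (φ : ∀ m, A m →ₗ[S] B m)
    (hφ : ∀ m, (b m).comp (φ (m + 1)) = (φ m).comp (a m)) :
    towerLimit A a →ₗ[S] towerLimit B b where
  toFun x := ⟨fun m => φ m (x.1 m), fun m => by
    have h := LinearMap.congr_fun (hφ m) (x.1 (m + 1))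
    simp only [LinearMap.coe_comp, Function.comp_apply] at h
    rw [h, x.2 m]⟩
  map_add' x y := Subtype.ext (funext fun m => by simp)
  map_smul' c x := Subtype.ext (funext fun m => by simp)


open TensorProduct


lemma D_mem_pow_smul (m : ℕ) {x : S} (hx : x ∈ I ^ (m + 1)) :
    KaehlerDifferential.D R S x ∈ (I ^ m • ⊤ : Submodule S (Ω[S⁄R])) := by
  induction m generalizing x with
  | zero => simp
  | succ m ih =>
    rw [pow_succ] at hx
    refine Submodule.mul_induction_on hx (fun a ha b hb => ?_) (fun a b ha hb => ?_)
    · rw [Derivation.leibniz]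
      refine add_mem (Submodule.smul_mem_smul ha trivial) ?_
      have : b • KaehlerDifferential.D R S a ∈ I • (I ^ m • (⊤ : Submodule S (Ω[S⁄R]))) :=
        Submodule.smul_mem_smul hb (ih ha)
      rwa [← Submodule.smul_assoc, smul_eq_mul, ← pow_succ'] at this
    · rw [map_add]; exact add_mem ha hb

lemma ker_kaehlerMap_le (J : Ideal S) :
    LinearMap.ker (KaehlerDifferential.map R R S (S ⧸ J)) ≤
      (J • ⊤ : Submodule S (Ω[S⁄R])) ⊔
        Submodule.span S (KaehlerDifferential.D R S '' (J : Set S)) := by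
  intro ω hω
  have hexact := KaehlerDifferential.exact_kerCotangentToTensor_mapBaseChange R S (S ⧸ J)
    Ideal.Quotient.mk_surjective
  have hq : KaehlerDifferential.mapBaseChange R S (S ⧸ J)
      ((1 : S ⧸ J) ⊗ₜ[S] ω) = 0 := by
    rw [KaehlerDifferential.mapBaseChange_tmul, LinearMap.mem_ker.mp hω, smul_zero]
  obtain ⟨c, hc⟩ := (hexact _).mp hq
  obtain ⟨x, rfl⟩ := Ideal.toCotangent_surjective _ c
  rw [KaehlerDifferential.kerCotangentToTensor_toCotangent] at hc
  have hx : (x : S) ∈ J := by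
    exact Ideal.Quotient.eq_zero_iff_mem.mp x.2
  have hker : ω - KaehlerDifferential.D R S x ∈ (J • ⊤ : Submodule S (Ω[S⁄R])) := by
    have h0 : (1 : S ⧸ J) ⊗ₜ[S] (ω - KaehlerDifferential.D R S (x : S)) = 0 := by
      rw [TensorProduct.tmul_sub, hc, sub_self]
    have h2 : (quotTensorEquivQuotSMul (Ω[S⁄R]) J)
        ((1 : S ⧸ J) ⊗ₜ[S] (ω - KaehlerDifferential.D R S (x : S))) =
        Submodule.Quotient.mk (ω - KaehlerDifferential.D R S (x : S)) := by
      simpa using LinearMap.congr_fun (quotTensorEquivQuotSMul_comp_mk (M := Ω[S⁄R]) J)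
        (ω - KaehlerDifferential.D R S (x : S))
    rw [h0, LinearEquiv.map_zero] at h2
    rw [← Submodule.Quotient.mk_eq_zero]
    exact h2.symm
  have : ω = (ω - KaehlerDifferential.D R S x) + KaehlerDifferential.D R S x := by abel
  rw [this]
  exact Submodule.add_mem_sup hker (Submodule.subset_span ⟨x, hx, rfl⟩)

lemma ker_kaehlerMap_le_pow_smul (m : ℕ) :
    LinearMap.ker (KaehlerDifferential.map R R S (S ⧸ I ^ (m + 1))) ≤
      (I ^ m • ⊤ : Submodule S (Ω[S⁄R])) := by
  refine (ker_kaehlerMap_le (I ^ (m + 1))).trans (sup_le ?_ ?_)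
  · exact Submodule.smul_mono_left (Ideal.pow_le_pow_right (Nat.le_succ m))
  · rw [Submodule.span_le]
    rintro _ ⟨x, hx, rfl⟩
    exact D_mem_pow_smul I m hx

lemma kaehlerToQuot_surjective (m : ℕ) :
    Function.Surjective (kaehlerToQuot (R := R) I m) := by
  intro y
  obtain ⟨ω, hω⟩ := KaehlerDifferential.map_surjective_of_surjective R R S (S ⧸ I ^ m)
    Ideal.Quotient.mk_surjective y
  exact ⟨Submodule.Quotient.mk ω, hω⟩

lemma kaehlerTransQ_ker (m : ℕ) {w : Ω[S⁄R] ⧸ (I ^ (m + 1) • ⊤ : Submodule S (Ω[S⁄R]))}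
    (hw : kaehlerToQuot (R := R) I (m + 1) w = 0) :
    kaehlerTransQ (R := R) I m w = 0 := by
  obtain ⟨ω, rfl⟩ := Submodule.Quotient.mk_surjective _ w
  have h1 : KaehlerDifferential.map R R S (S ⧸ I ^ (m + 1)) ω = 0 := hw
  have h2 : ω ∈ (I ^ m • ⊤ : Submodule S (Ω[S⁄R])) :=
    ker_kaehlerMap_le_pow_smul I m (LinearMap.mem_ker.mpr h1)
  simp only [kaehlerTransQ]
  rw [Submodule.mapQ_apply, LinearMap.id_coe, id_eq, Submodule.Quotient.mk_eq_zero]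
  exact h2

/-- **`lim Ω[S⁄R]/I^m Ω[S⁄R] = lim Ω[(S/I^m)⁄R]`.**  The natural map between the
inverse limits, induced levelwise by the natural maps
`Ω[S⁄R]/I^m•Ω[S⁄R] → Ω[(S/I^m)⁄R]`, is an isomorphism of `S`-modules. -/
theorem bijective_towerLimitMap_kaehler :
    Function.Bijective
      (towerLimitMap (S := S)
        (A := fun m => Ω[S⁄R] ⧸ (I ^ m • ⊤ : Submodule S (Ω[S⁄R])))
        (B := fun m => Ω[(S ⧸ I ^ m)⁄R])
        (fun m => kaehlerTransQ (R := R) I m) (fun m => kaehlerQuotTrans I m)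
        (fun m => kaehlerToQuot I m) (fun m => kaehlerToQuot_compat I m)) := by
  constructor
  · rw [injective_iff_map_eq_zero]
    intro x hx
    have hx' : ∀ m, kaehlerToQuot (R := R) I m (x.1 m) = 0 := fun m =>
      congrFun (congrArg Subtype.val hx) m
    ext m
    show x.1 m = 0
    rw [← x.2 m]
    exact kaehlerTransQ_ker I m (hx' (m + 1))
  · rintro ⟨y, hy⟩
    choose z hz using fun m => kaehlerToQuot_surjective (R := R) I (m + 1) (y (m + 1))
    have key : ∀ m (w w' : Ω[S⁄R] ⧸ (I ^ (m + 1) • ⊤ : Submodule S (Ω[S⁄R]))),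
        kaehlerToQuot (R := R) I (m + 1) w = kaehlerToQuot (R := R) I (m + 1) w' →
        kaehlerTransQ (R := R) I m w = kaehlerTransQ (R := R) I m w' := by
      intro m w w' h
      obtain ⟨ω, rfl⟩ := Submodule.Quotient.mk_surjective _ w
      obtain ⟨ω', rfl⟩ := Submodule.Quotient.mk_surjective _ w'
      simp only [kaehlerToQuot, Submodule.liftQ_apply] at h
      have h2 : ω - ω' ∈ (I ^ m • ⊤ : Submodule S (Ω[S⁄R])) := by
        refine ker_kaehlerMap_le_pow_smul I m (LinearMap.mem_ker.mpr ?_)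
        rw [map_sub, h, sub_self]
      simp only [kaehlerTransQ]
      rw [Submodule.mapQ_apply, Submodule.mapQ_apply, LinearMap.id_coe, id_eq,
        Submodule.Quotient.eq]
      exact h2
    have hmem : (fun m => kaehlerTransQ (R := R) I m (z m)) ∈
        towerLimit (S := S) (fun m => Ω[S⁄R] ⧸ (I ^ m • ⊤ : Submodule S (Ω[S⁄R])))
          (fun m => kaehlerTransQ (R := R) I m) := by
      intro m
      refine key m _ _ ?_
      show kaehlerToQuot (R := R) I (m + 1) (kaehlerTransQ (R := R) I (m + 1) (z (m + 1)))
        = kaehlerToQuot (R := R) I (m + 1) (z m)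
      have h1 := LinearMap.congr_fun (kaehlerToQuot_compat (R := R) I (m + 1)) (z (m + 1))
      simp only [LinearMap.coe_comp, Function.comp_apply] at h1
      rw [← h1, hz (m + 1), hz m]
      exact hy (m + 1)
    refine ⟨⟨_, hmem⟩, ?_⟩
    ext m
    show kaehlerToQuot (R := R) I m (kaehlerTransQ (R := R) I m (z m)) = y m
    have h1 := LinearMap.congr_fun (kaehlerToQuot_compat (R := R) I m) (z m)
    simp only [LinearMap.coe_comp, Function.comp_apply] at h1
    rw [← h1, hz m, hy m]
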